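/- Single-layer SLM fixed point: specializing the GLM fixed-point equations to the AWGN likelihood P(y|v) = N(y|v, σ_w²), the three coupled equations for (d, q, d̃) reduce to the single scalar fixed-point equation η = σ_w² + (1/α)·ε(η), where η = 1/(2d̃) and ε(η) = E[(X − E[X|X+√η·Z])²] is the MMSE of estimating X ~ p_X from X + √η·Z with Z standard normal independent of X. -/

import Mathlib

set_option maxHeartbeats 1600000


open MeasureTheory Real Filter Set

/-- One-dimensional Gaussian density with mean `m` and variance `v`. -/
noncomputable def gaussPdf (y m v : ℝ) : ℝ :=
  (Real.sqrt (2*Real.pi*v))⁻¹ * Real.exp (-(y-m)^2/(2*v))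

/-- Standard normal density (the Gaussian measure `Dξ`). -/
noncomputable def stdNormPdf (z : ℝ) : ℝ :=
  (Real.sqrt (2*Real.pi))⁻¹ * Real.exp (-z^2/2)

/-- The quantity `d(η) = E[⟨X⟩²]` for the scalar AWGN channel with noise variance `η`. -/
noncomputable def dFun (pX : ℝ → ℝ) (η : ℝ) : ℝ :=
  ∫ ζ : ℝ, (∫ x : ℝ, x * pX x * gaussPdf x ζ η)^2 / (∫ x : ℝ, pX x * gaussPdf x ζ η)

/-- The MMSE `ε(η)` of estimating `X ~ p_X` from `X + √η·Z`, `Z` standard normal: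
`ε(η) = E[X²] - E[⟨X⟩²]`. -/
noncomputable def mmseFun (pX : ℝ → ℝ) (η : ℝ) : ℝ :=
  (∫ x : ℝ, x^2 * pX x) - dFun pX η


lemma tendsto_exp_sq {b : ℝ} (hb : 0 < b) (l : Filter ℝ) (hl : l ≤ cocompact ℝ) :
    Tendsto (fun x : ℝ => Real.exp (-b * x ^ 2)) l (nhds 0) := by
  have h1 : Tendsto (fun x : ℝ => |x|) l atTop :=
    (tendsto_norm_cocompact_atTop.mono_left hl).congr (fun x => (Real.norm_eq_abs x).symm)
  have h2 : Tendsto (fun x : ℝ => b * x ^ 2) l atTop := by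
    have := (tendsto_pow_atTop (n := 2) two_ne_zero).comp h1
    simp_rw [Function.comp_def, sq_abs] at this
    exact this.const_mul_atTop hb
  have h3 : Tendsto (fun x : ℝ => -b * x ^ 2) l atBot := by
    simp_rw [neg_mul]
    exact tendsto_neg_atBot_iff.mpr h2
  exact Real.tendsto_exp_atBot.comp h3

lemma tendsto_mul_exp_sq {b : ℝ} (hb : 0 < b) (l : Filter ℝ) (hl : l ≤ cocompact ℝ) :
    Tendsto (fun x : ℝ => x * Real.exp (-b * x ^ 2)) l (nhds 0) := by
  rw [tendsto_zero_iff_abs_tendsto_zero]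
  have h := (tendsto_rpow_abs_mul_exp_neg_mul_sq_cocompact hb 1).mono_left hl
  refine h.congr (fun x => ?_)
  simp [Function.comp, abs_mul, abs_of_pos (Real.exp_pos _), Real.rpow_one]

lemma integrable_sq_mul_exp {b : ℝ} (hb : 0 < b) :
    Integrable (fun x : ℝ => x ^ 2 * Real.exp (-b * x ^ 2)) := by
  have h := integrable_rpow_mul_exp_neg_mul_sq hb (s := 2) (by norm_num)
  refine h.congr (Filter.Eventually.of_forall fun x => ?_)
  show x ^ ((2:ℕ):ℝ) * Real.exp (-b * x ^ 2) = x ^ 2 * Real.exp (-b * x ^ 2)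
  rw [Real.rpow_natCast]

lemma integral_mul_exp_sq {b : ℝ} (hb : 0 < b) :
    ∫ x : ℝ, x * Real.exp (-b * x ^ 2) = 0 := by
  set f : ℝ → ℝ := fun x => -(2*b)⁻¹ * Real.exp (-b * x ^ 2) with hf
  have hderiv : ∀ x : ℝ, HasDerivAt f (x * Real.exp (-b * x ^ 2)) x := by
    intro x
    have h1 : HasDerivAt (fun x : ℝ => -b * x ^ 2) (-b * (2 * x)) x := by
      simpa using ((hasDerivAt_pow 2 x).const_mul (-b))
    have h2 := (h1.exp).const_mul (-(2*b)⁻¹)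
    refine h2.congr_deriv ?_
    field_simp
  have hint : Integrable (fun x : ℝ => x * Real.exp (-b * x ^ 2)) :=
    integrable_mul_exp_neg_mul_sq hb
  have htop : Filter.Tendsto f Filter.atTop (nhds 0) := by
    have := (tendsto_exp_sq hb Filter.atTop _root_.atTop_le_cocompact).const_mul (-(2*b)⁻¹)
    rw [mul_zero] at this
    exact this
  have hbot : Filter.Tendsto f Filter.atBot (nhds 0) := by
    have := (tendsto_exp_sq hb Filter.atBot _root_.atBot_le_cocompact).const_mul (-(2*b)⁻¹)
    rw [mul_zero] at this
    exact this
  have h1 : ∫ x in Set.Ioi (0:ℝ), x * Real.exp (-b * x ^ 2) = 0 - f 0 :=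
    integral_Ioi_of_hasDerivAt_of_tendsto' (fun x _ => hderiv x) hint.integrableOn htop
  have h2 : ∫ x in Set.Iic (0:ℝ), x * Real.exp (-b * x ^ 2) = f 0 - 0 :=
    integral_Iic_of_hasDerivAt_of_tendsto' (fun x _ => hderiv x) hint.integrableOn hbot
  rw [← intervalIntegral.integral_Iic_add_Ioi (b := (0:ℝ)) hint.integrableOn hint.integrableOn, h1, h2]
  ring

lemma integral_sq_mul_exp {b : ℝ} (hb : 0 < b) :
    ∫ x : ℝ, x ^ 2 * Real.exp (-b * x ^ 2) = Real.sqrt (Real.pi / b) / (2*b) := by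
  have hb2 : (2*b) ≠ 0 := by positivity
  set g : ℝ → ℝ := fun x => -(2*b)⁻¹ * (x * Real.exp (-b * x ^ 2)) with hg
  set g' : ℝ → ℝ := fun x => x ^ 2 * Real.exp (-b * x ^ 2) - (2*b)⁻¹ * Real.exp (-b * x ^ 2)
    with hg'
  have hderiv : ∀ x : ℝ, HasDerivAt g (g' x) x := by
    intro x
    have h1 : HasDerivAt (fun x : ℝ => -b * x ^ 2) (-b * (2 * x)) x := by
      simpa using ((hasDerivAt_pow 2 x).const_mul (-b))
    have h2 : HasDerivAt (fun x : ℝ => x * Real.exp (-b * x ^ 2))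
        (1 * Real.exp (-b * x ^ 2) + x * (Real.exp (-b * x ^ 2) * (-b * (2*x)))) x :=
      (hasDerivAt_id x).mul h1.exp
    have h3 := h2.const_mul (-(2*b)⁻¹)
    refine h3.congr_deriv ?_
    simp only [hg']
    field_simp
    ring
  have hint1 := integrable_sq_mul_exp hb
  have hint2 := (integrable_exp_neg_mul_sq hb).const_mul ((2*b)⁻¹)
  have hint : Integrable g' := hint1.sub hint2
  have htop : Filter.Tendsto g Filter.atTop (nhds 0) := by
    have := (tendsto_mul_exp_sq hb Filter.atTop _root_.atTop_le_cocompact).const_mul (-(2*b)⁻¹)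
    rw [mul_zero] at this; exact this
  have hbot : Filter.Tendsto g Filter.atBot (nhds 0) := by
    have := (tendsto_mul_exp_sq hb Filter.atBot _root_.atBot_le_cocompact).const_mul (-(2*b)⁻¹)
    rw [mul_zero] at this; exact this
  have h1 : ∫ x in Set.Ioi (0:ℝ), g' x = 0 - g 0 :=
    integral_Ioi_of_hasDerivAt_of_tendsto' (fun x _ => hderiv x) hint.integrableOn htop
  have h2 : ∫ x in Set.Iic (0:ℝ), g' x = g 0 - 0 :=
    integral_Iic_of_hasDerivAt_of_tendsto' (fun x _ => hderiv x) hint.integrableOn hbot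
  have h0 : ∫ x : ℝ, g' x = 0 := by
    rw [← intervalIntegral.integral_Iic_add_Ioi (b := (0:ℝ)) hint.integrableOn hint.integrableOn,
      h1, h2]
    ring
  have hsplit : ∫ x : ℝ, g' x
      = (∫ x : ℝ, x ^ 2 * Real.exp (-b * x ^ 2)) - (2*b)⁻¹ * ∫ x : ℝ, Real.exp (-b * x ^ 2) := by
    rw [hg']
    rw [integral_sub hint1 hint2, MeasureTheory.integral_const_mul]
  rw [hsplit, integral_gaussian] at h0
  rw [sub_eq_zero] at h0
  rw [h0]
  ring

lemma gaussPdf_nonneg (y m v : ℝ) : 0 ≤ gaussPdf y m v := by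
  unfold gaussPdf; positivity

lemma gaussPdf_pos (y m : ℝ) {v : ℝ} (hv : 0 < v) : 0 < gaussPdf y m v := by
  unfold gaussPdf
  have : (0:ℝ) < 2*Real.pi*v := by positivity
  positivity

lemma gaussPdf_of_nonpos (y m : ℝ) {v : ℝ} (hv : v ≤ 0) : gaussPdf y m v = 0 := by
  unfold gaussPdf
  have h : 2*Real.pi*v ≤ 0 := by
    have := Real.pi_pos; nlinarith
  rw [Real.sqrt_eq_zero_of_nonpos h, inv_zero, zero_mul]

lemma gaussPdf_eq {v : ℝ} (hv : 0 < v) (y m : ℝ) :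
    gaussPdf y m v = (Real.sqrt (2*Real.pi*v))⁻¹ * Real.exp (-(2*v)⁻¹ * (y-m)^2) := by
  unfold gaussPdf
  congr 1
  congr 1
  field_simp

lemma integrable_poly_gauss {v : ℝ} (hv : 0 < v) (m A B C : ℝ) :
    Integrable (fun z : ℝ => (A + B*z + C*z^2) * gaussPdf z m v) := by
  set b : ℝ := (2*v)⁻¹ with hb
  have hbpos : 0 < b := by positivity
  have base : Integrable (fun u : ℝ =>
      ((A + B*m + C*m^2) + (B + 2*C*m)*u + C*u^2) * ((Real.sqrt (2*Real.pi*v))⁻¹ *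
        Real.exp (-b * u ^ 2))) := by
    have h0 := (integrable_exp_neg_mul_sq hbpos).const_mul
      ((A + B*m + C*m^2) * (Real.sqrt (2*Real.pi*v))⁻¹)
    have h1 := (integrable_mul_exp_neg_mul_sq hbpos).const_mul
      ((B + 2*C*m) * (Real.sqrt (2*Real.pi*v))⁻¹)
    have h2 := (integrable_sq_mul_exp hbpos).const_mul (C * (Real.sqrt (2*Real.pi*v))⁻¹)
    refine ((h0.add h1).add h2).congr (Filter.Eventually.of_forall fun u => ?_)
    simp only [Pi.add_apply]
    ring
  have := base.comp_sub_right m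
  refine this.congr (Filter.Eventually.of_forall fun z => ?_)
  simp only
  rw [gaussPdf_eq hv, hb]
  ring

lemma integral_poly_gauss {v : ℝ} (hv : 0 < v) (m A B C : ℝ) :
    ∫ z : ℝ, (A + B*z + C*z^2) * gaussPdf z m v = A + B*m + C*(v + m^2) := by
  set b : ℝ := (2*v)⁻¹ with hb
  have hbpos : 0 < b := by positivity
  set R : ℝ := Real.sqrt (2*Real.pi*v) with hR
  have hRpos : 0 < R := Real.sqrt_pos.mpr (by positivity)
  have hRb : Real.sqrt (Real.pi / b) = R := by
    rw [hR, hb]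
    congr 1
    field_simp
  have key : ∫ z : ℝ, (A + B*z + C*z^2) * gaussPdf z m v
      = ∫ u : ℝ, ((A + B*m + C*m^2) + (B + 2*C*m)*u + C*u^2) * (R⁻¹ * Real.exp (-b * u ^ 2)) := by
    rw [← integral_add_right_eq_self (fun z => (A + B*z + C*z^2) * gaussPdf z m v) m]
    congr 1
    funext u
    rw [gaussPdf_eq hv, hb, ← hR]
    ring
  rw [key]
  have h0 := (integrable_exp_neg_mul_sq hbpos).const_mul ((A + B*m + C*m^2) * R⁻¹)
  have h1 := (integrable_mul_exp_neg_mul_sq hbpos).const_mul ((B + 2*C*m) * R⁻¹)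
  have h2 := (integrable_sq_mul_exp hbpos).const_mul (C * R⁻¹)
  have e1 : ∫ u : ℝ, ((A + B*m + C*m^2) + (B + 2*C*m)*u + C*u^2) * (R⁻¹ * Real.exp (-b * u ^ 2))
      = ∫ u : ℝ, ((A + B*m + C*m^2) * R⁻¹ * Real.exp (-b * u ^ 2)
        + ((B + 2*C*m) * R⁻¹ * (u * Real.exp (-b * u ^ 2))
          + C * R⁻¹ * (u^2 * Real.exp (-b * u ^ 2)))) := by
    congr 1
    funext u
    ring
  have h12 : Integrable (fun u : ℝ => (B + 2*C*m) * R⁻¹ * (u * Real.exp (-b * u ^ 2))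
      + C * R⁻¹ * (u^2 * Real.exp (-b * u ^ 2))) := h1.add h2
  rw [e1, integral_add h0 h12, integral_add h1 h2]
  rw [MeasureTheory.integral_const_mul, MeasureTheory.integral_const_mul,
    MeasureTheory.integral_const_mul, integral_gaussian, integral_mul_exp_sq hbpos,
    integral_sq_mul_exp hbpos, hRb]
  have h2b : 1 / (2*b) = v := by rw [hb]; field_simp
  have hRR : R⁻¹ * R = 1 := inv_mul_cancel₀ (ne_of_gt hRpos)
  linear_combination (A + B*m + C*m^2 + C*(1/(2*b))) * hRR + C * h2b

lemma integral_gaussPdf {v : ℝ} (hv : 0 < v) (m : ℝ) : ∫ z : ℝ, gaussPdf z m v = 1 := by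
  have := integral_poly_gauss hv m 1 0 0
  simpa using this

lemma integral_id_gaussPdf {v : ℝ} (hv : 0 < v) (m : ℝ) : ∫ z : ℝ, z * gaussPdf z m v = m := by
  have := integral_poly_gauss hv m 0 1 0
  simpa using this

lemma sqrt_prefactor {a b c d : ℝ} (ha : 0 ≤ a) (hc : 0 ≤ c) (h : a * b = c * d) (hb : 0 ≤ b) :
    Real.sqrt a * Real.sqrt b = Real.sqrt c * Real.sqrt d := by
  rw [← Real.sqrt_mul ha, ← Real.sqrt_mul hc, h]

lemma gauss_prod1 {w v : ℝ} (hw : 0 < w) (hv : 0 < v) (y m z : ℝ) :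
    gaussPdf y z w * gaussPdf z m v
      = gaussPdf y m (w+v) * gaussPdf z ((v*y+w*m)/(w+v)) (w*v/(w+v)) := by
  have hwv : 0 < w + v := by linarith
  have hpi := Real.pi_pos
  unfold gaussPdf
  rw [mul_mul_mul_comm, ← Real.exp_add, mul_mul_mul_comm, ← Real.exp_add, ← mul_inv, ← mul_inv]
  congr 1
  · congr 1
    refine sqrt_prefactor (by positivity) (by positivity) ?_ (by positivity)
    field_simp
  · congr 1
    field_simp
    ring

lemma gauss_prod2 {s : ℝ} (hs : 0 < s) (c y ξ : ℝ) :
    gaussPdf y (c*ξ) s * gaussPdf ξ 0 1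
      = gaussPdf y 0 (s+c^2) * gaussPdf ξ (c*y/(s+c^2)) (s/(s+c^2)) := by
  have hS : 0 < s + c^2 := by positivity
  have hpi := Real.pi_pos
  unfold gaussPdf
  rw [mul_mul_mul_comm, ← Real.exp_add, mul_mul_mul_comm, ← Real.exp_add, ← mul_inv, ← mul_inv]
  congr 1
  · congr 1
    refine sqrt_prefactor (by positivity) (by positivity) ?_ (by positivity)
    field_simp
  · congr 1
    field_simp
    ring

/-- Single-layer SLM fixed point: with the AWGN likelihood `P(y|v) = N(y|v,σ_w²)`,
the GLM fixed-point equations for `(d, q, d̃)` reduce to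
`η = σ_w² + (1/α)·ε(η)` with `η = 1/(2d̃)`. -/
theorem stmt15 (pX : ℝ → ℝ) (hmeas : Measurable pX) (hnn : ∀ x, 0 ≤ pX x)
    (hnorm : ∫ x, pX x = 1)
    (σX2 : ℝ) (hσ : σX2 = ∫ x : ℝ, x^2 * pX x)
    (α : ℝ) (hα : 0 < α) (σw2 : ℝ) (hσw : 0 < σw2)
    (d q dt η : ℝ) (hdt : 0 < dt) (hη : η = 1/(2*dt))
    (hd : d = dFun pX η)
    (hq : q = ∫ y : ℝ, ∫ ξ : ℝ,
        ((∫ z : ℝ, z * gaussPdf y z σw2 *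
            gaussPdf z (Real.sqrt (d/α) * ξ) ((σX2 - d)/α))^2
          / (∫ z : ℝ, gaussPdf y z σw2 *
            gaussPdf z (Real.sqrt (d/α) * ξ) ((σX2 - d)/α))) * stdNormPdf ξ)
    (hdteq : dt = α*(α*q - d)/(2*(σX2 - d)^2)) :
    η = σw2 + (1/α) * mmseFun pX η := by
  have hpi := Real.pi_pos
  have hd0 : 0 ≤ d := by
    rw [hd]
    unfold dFun
    apply integral_nonneg
    intro ζ
    apply div_nonneg (sq_nonneg _)
    apply integral_nonneg
    intro x
    exact mul_nonneg (hnn x) (gaussPdf_nonneg _ _ _)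
  have hD : 0 < σX2 - d := by
    by_contra hle
    push_neg at hle
    have hv0 : (σX2 - d)/α ≤ 0 := div_nonpos_of_nonpos_of_nonneg (by linarith) hα.le
    have hg0 : ∀ z m : ℝ, gaussPdf z m ((σX2-d)/α) = 0 := fun z m => gaussPdf_of_nonpos z m hv0
    have hq0 : q = 0 := by
      rw [hq]
      simp [hg0]
    rw [hdteq, hq0] at hdt
    have : α*(α*0 - d)/(2*(σX2 - d)^2) ≤ 0 := by
      apply div_nonpos_of_nonpos_of_nonneg
      · nlinarith
      · positivity
    linarith
  set c := Real.sqrt (d/α) with hc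
  have hc2 : c^2 = d/α := Real.sq_sqrt (by positivity)
  set v := (σX2-d)/α with hvdef
  have hv : 0 < v := div_pos hD hα
  set s := σw2 + v with hsdef
  have hs : 0 < s := by linarith
  set S := s + c^2 with hSdef
  have hS : 0 < S := by nlinarith [sq_nonneg c]
  have hvv' : 0 < σw2*v/s := by positivity
  have hτ : 0 < s/S := by positivity
  -- inner z-integrals
  have hratio : ∀ y ξ : ℝ,
      (∫ z : ℝ, z * gaussPdf y z σw2 * gaussPdf z (c * ξ) v)^2
        / (∫ z : ℝ, gaussPdf y z σw2 * gaussPdf z (c * ξ) v)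
      = ((v*y + σw2*(c*ξ))/s)^2 * gaussPdf y (c*ξ) s := by
    intro y ξ
    have hprod : ∀ z : ℝ, gaussPdf y z σw2 * gaussPdf z (c*ξ) v
        = gaussPdf y (c*ξ) s * gaussPdf z ((v*y+σw2*(c*ξ))/s) (σw2*v/s) := by
      intro z
      rw [gauss_prod1 hσw hv y (c*ξ) z, hsdef]
    have hden : (∫ z : ℝ, gaussPdf y z σw2 * gaussPdf z (c*ξ) v) = gaussPdf y (c*ξ) s := by
      simp_rw [hprod]
      rw [MeasureTheory.integral_const_mul, integral_gaussPdf hvv', mul_one]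
    have hnum : (∫ z : ℝ, z * gaussPdf y z σw2 * gaussPdf z (c*ξ) v)
        = gaussPdf y (c*ξ) s * ((v*y+σw2*(c*ξ))/s) := by
      have : ∀ z : ℝ, z * gaussPdf y z σw2 * gaussPdf z (c*ξ) v
          = gaussPdf y (c*ξ) s * (z * gaussPdf z ((v*y+σw2*(c*ξ))/s) (σw2*v/s)) := by
        intro z
        rw [mul_assoc, hprod z]
        ring
      simp_rw [this]
      rw [MeasureTheory.integral_const_mul, integral_id_gaussPdf hvv']
    rw [hden, hnum]
    have hG : gaussPdf y (c*ξ) s ≠ 0 := ne_of_gt (gaussPdf_pos _ _ hs)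
    field_simp
  -- inner ξ-integral
  have hinner : ∀ y : ℝ,
      (∫ ξ : ℝ, (((v*y + σw2*(c*ξ))/s)^2 * gaussPdf y (c*ξ) s) * stdNormPdf ξ)
      = (σw2^2*c^2/(s*S) + 0*y + ((v+c^2)/S)^2*y^2) * gaussPdf y 0 S := by
    intro y
    have hstd : ∀ ξ : ℝ, stdNormPdf ξ = gaussPdf ξ 0 1 := by
      intro ξ
      unfold stdNormPdf gaussPdf
      norm_num
    have step : ∀ ξ : ℝ, (((v*y + σw2*(c*ξ))/s)^2 * gaussPdf y (c*ξ) s) * stdNormPdf ξ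
        = gaussPdf y 0 S * (((v*y/s)^2 + (2*(v*y/s)*(σw2*c/s))*ξ + (σw2*c/s)^2*ξ^2)
            * gaussPdf ξ (c*y/S) (s/S)) := by
      intro ξ
      rw [hstd, mul_assoc, gauss_prod2 hs c y ξ, ← hSdef]
      ring
    simp_rw [step]
    rw [MeasureTheory.integral_const_mul, integral_poly_gauss hτ]
    have halg : (v*y/s)^2 + (2*(v*y/s)*(σw2*c/s))*(c*y/S) + (σw2*c/s)^2*(s/S + (c*y/S)^2)
        = σw2^2*c^2/(s*S) + 0*y + ((v+c^2)/S)^2*y^2 := by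
      rw [hSdef, hsdef]
      field_simp
      ring
    rw [halg]
    ring
  -- q value
  have hqval : q = σw2^2*c^2/(s*S) + 0*0 + ((v+c^2)/S)^2*(S + 0^2) := by
    rw [hq]
    simp_rw [hratio, hinner]
    rw [integral_poly_gauss hS]
  -- dt value
  have hdts : dt = 1/(2*s) := by
    rw [hdteq, hqval, hSdef, hsdef, hc2, hvdef]
    have h1 : σX2 - d ≠ 0 := ne_of_gt hD
    have h2 : α ≠ 0 := ne_of_gt hα
    have h3 : σw2 + (σX2-d)/α ≠ 0 := by
      have := div_pos hD hα
      exact ne_of_gt (by linarith)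
    have h4 : σw2 + (σX2-d)/α + d/α ≠ 0 := by
      have : (0:ℝ) < σw2 + (σX2-d)/α + d/α := by
        have := div_nonneg hd0 hα.le
        have := div_pos hD hα
        linarith
      exact ne_of_gt this
    field_simp
    ring
  have hηs : η = s := by
    rw [hη, hdts]
    field_simp
  have hm : mmseFun pX η = σX2 - d := by
    unfold mmseFun
    rw [← hσ, ← hd]
  rw [hm, hηs, hsdef, hvdef]
  field_simp
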